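/- Let ι be a nonempty finite type, f : ι → ℝ, and let M = {i : ι | f i = (maximum value of f over ι)}. As λ → ∞ (Filter.atTop), the Shannon entropy of the softmax distribution, ∑ i, Real.negMulLog (Real.exp (λ * f i) / ∑ j, Real.exp (λ * f j)), tends to Real.log (cardinality of M). (This identifies the minimal-entropy endpoint h_∞ used in the paper's reparameterization and entropy-matching construction.) -/

import Mathlib

open scoped Classical

theorem softmax_entropy_tendsto_log_card_argmax
    {ι : Type*} [Fintype ι] [Nonempty ι] (f : ι → ℝ)
    (M : Finset ι)
    (hM : M = Finset.univ.filter (fun k => f k = Finset.univ.sup' Finset.univ_nonempty f)) :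
    Filter.Tendsto
      (fun l : ℝ => ∑ i, Real.negMulLog (Real.exp (l * f i) / ∑ j, Real.exp (l * f j)))
      Filter.atTop (nhds (Real.log M.card)) := by
  classical
  set m := Finset.univ.sup' Finset.univ_nonempty f with hm
  have hmem : ∀ i : ι, i ∈ M ↔ f i = m := by
    intro i; simp [hM, hm]
  have hcard : 0 < M.card := by
    obtain ⟨i, -, hi⟩ := Finset.exists_mem_eq_sup' Finset.univ_nonempty f
    exact Finset.card_pos.mpr ⟨i, (hmem i).mpr hi.symm⟩
  have hcardR : (0:ℝ) < (M.card : ℝ) := by exact_mod_cast hcard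
  -- pointwise limits of the shifted exponentials
  have hnum : ∀ j : ι, Filter.Tendsto (fun l : ℝ => Real.exp (l * (f j - m)))
      Filter.atTop (nhds (if f j = m then 1 else 0)) := by
    intro j
    by_cases h : f j = m
    · simp [h]
    · have hle : f j ≤ m := Finset.le_sup' f (Finset.mem_univ j)
      have hneg : f j - m < 0 := sub_neg.mpr (lt_of_le_of_ne hle h)
      simp only [h, if_false]
      have h1 : Filter.Tendsto (fun l : ℝ => l * (f j - m)) Filter.atTop Filter.atBot :=
        Filter.Tendsto.atTop_mul_const_of_neg hneg Filter.tendsto_id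
      exact Real.tendsto_exp_atBot.comp h1
  have hdenom : Filter.Tendsto (fun l : ℝ => ∑ j, Real.exp (l * (f j - m)))
      Filter.atTop (nhds (M.card : ℝ)) := by
    have h1 : Filter.Tendsto (fun l : ℝ => ∑ j, Real.exp (l * (f j - m)))
        Filter.atTop (nhds (∑ j : ι, if f j = m then (1:ℝ) else 0)) :=
      tendsto_finset_sum _ (fun j _ => hnum j)
    have h2 : (∑ j : ι, if f j = m then (1:ℝ) else 0) = (M.card : ℝ) := by
      rw [Finset.sum_boole, hM]
    rwa [h2] at h1
  -- limits of the softmax probabilities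
  have key : ∀ i : ι, Filter.Tendsto
      (fun l : ℝ => Real.exp (l * f i) / ∑ j, Real.exp (l * f j))
      Filter.atTop (nhds (if i ∈ M then ((M.card : ℝ))⁻¹ else 0)) := by
    intro i
    have hrw : ∀ l : ℝ, Real.exp (l * f i) / ∑ j, Real.exp (l * f j)
        = Real.exp (l * (f i - m)) / ∑ j, Real.exp (l * (f j - m)) := by
      intro l
      have he : ∀ j : ι, Real.exp (l * (f j - m)) = Real.exp (l * f j) * Real.exp (-(l * m)) := by
        intro j; rw [← Real.exp_add]; ring_nf
      rw [he i]
      have hs : (∑ j, Real.exp (l * (f j - m)))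
          = (∑ j, Real.exp (l * f j)) * Real.exp (-(l * m)) := by
        rw [Finset.sum_mul]; exact Finset.sum_congr rfl fun j _ => he j
      rw [hs, mul_div_mul_right _ _ (Real.exp_ne_zero _)]
    simp only [hrw]
    have hdiv := Filter.Tendsto.div (hnum i) hdenom (ne_of_gt hcardR)
    by_cases h : i ∈ M
    · have hfi : f i = m := (hmem i).mp h
      simpa [h, hfi, one_div, Pi.div_def] using hdiv
    · have hfi : f i ≠ m := fun hc => h ((hmem i).mpr hc)
      simpa [h, hfi, Pi.div_def] using hdiv
  -- pass through negMulLog and sum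
  have hsum : Filter.Tendsto
      (fun l : ℝ => ∑ i, Real.negMulLog (Real.exp (l * f i) / ∑ j, Real.exp (l * f j)))
      Filter.atTop
      (nhds (∑ i : ι, Real.negMulLog (if i ∈ M then ((M.card : ℝ))⁻¹ else 0))) := by
    refine tendsto_finset_sum _ (fun i _ => ?_)
    exact (Real.continuous_negMulLog.tendsto _).comp (key i)
  have hval : (∑ i : ι, Real.negMulLog (if i ∈ M then ((M.card : ℝ))⁻¹ else 0))
      = Real.log M.card := by
    simp only [apply_ite Real.negMulLog, Real.negMulLog_zero]
    rw [Finset.sum_ite_mem, Finset.univ_inter, Finset.sum_const]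
    have : Real.negMulLog ((M.card : ℝ))⁻¹ = ((M.card : ℝ))⁻¹ * Real.log (M.card : ℝ) := by
      rw [Real.negMulLog, Real.log_inv]; ring
    rw [this, nsmul_eq_mul, ← mul_assoc, mul_inv_cancel₀ (ne_of_gt hcardR), one_mul]
  rwa [hval] at hsum
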